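/- Let n ≥ 2 be an integer and define c₁(κ) := ⟨cos θ⟩_{M_κ}. Then, as κ → +∞, c₁(κ) − 1 + (n−1)/(2κ) − (n−1)(n−3)/(8κ²) = O(κ^{−3}). -/

import Mathlib

open MeasureTheory Real Filter Asymptotics

/-- The order parameter `c₁(κ) = ⟨cos θ⟩_{M_κ}`. -/
noncomputable def orderParam (n : ℕ) (κ : ℝ) : ℝ :=
  (∫ θ in Set.Ioo 0 π, Real.cos θ * Real.exp (κ * Real.cos θ) * Real.sin θ ^ (n - 2)) /
  (∫ θ in Set.Ioo 0 π, Real.exp (κ * Real.cos θ) * Real.sin θ ^ (n - 2))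

open Set

noncomputable def J (m a : ℕ) (κ : ℝ) : ℝ :=
  ∫ θ in Set.Ioo 0 π, (1 - Real.cos θ) ^ a * Real.exp (κ * Real.cos θ) * Real.sin θ ^ m

lemma contJ (m a : ℕ) (κ : ℝ) :
    Continuous (fun θ : ℝ => (1 - Real.cos θ) ^ a * Real.exp (κ * Real.cos θ) * Real.sin θ ^ m) := by
  fun_prop

lemma intJ (m a : ℕ) (κ : ℝ) :
    IntegrableOn (fun θ : ℝ => (1 - Real.cos θ) ^ a * Real.exp (κ * Real.cos θ) * Real.sin θ ^ m)
      (Set.Ioo 0 π) := by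
  exact ((contJ m a κ).integrableOn_Icc).mono_set Set.Ioo_subset_Icc_self

lemma J0_pos (m : ℕ) (κ : ℝ) : 0 < J m 0 κ := by
  have h : J m 0 κ = ∫ θ in (0:ℝ)..π,
      (1 - Real.cos θ) ^ 0 * Real.exp (κ * Real.cos θ) * Real.sin θ ^ m := by
    rw [intervalIntegral.integral_of_le pi_pos.le, integral_Ioc_eq_integral_Ioo]; rfl
  rw [h]
  apply intervalIntegral.intervalIntegral_pos_of_pos_on
  · exact (contJ m 0 κ).intervalIntegrable 0 π
  · intro x hx
    have hs : 0 < Real.sin x := Real.sin_pos_of_pos_of_lt_pi hx.1 hx.2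
    positivity
  · exact pi_pos

lemma J_nonneg (m a : ℕ) (κ : ℝ) : 0 ≤ J m a κ := by
  apply setIntegral_nonneg measurableSet_Ioo
  intro x hx
  have h1 : (0:ℝ) ≤ 1 - Real.cos x := by linarith [Real.cos_le_one x]
  have hs : 0 ≤ Real.sin x := Real.sin_nonneg_of_nonneg_of_le_pi hx.1.le hx.2.le
  positivity

-- derivative of exp(κ cos θ) * (1-cos θ)^a * sin θ^(m+1)
lemma hasDeriv_aux (m a : ℕ) (κ θ : ℝ) :
    HasDerivAt (fun θ : ℝ => Real.exp (κ * Real.cos θ) * (1 - Real.cos θ) ^ a * Real.sin θ ^ (m+1))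
      (Real.exp (κ * Real.cos θ) * (κ * -Real.sin θ) * (1 - Real.cos θ) ^ a * Real.sin θ ^ (m+1)
       + Real.exp (κ * Real.cos θ) * ((a : ℝ) * (1 - Real.cos θ) ^ (a-1) * Real.sin θ) * Real.sin θ ^ (m+1)
       + Real.exp (κ * Real.cos θ) * (1 - Real.cos θ) ^ a * (((m:ℝ)+1) * Real.sin θ ^ m * Real.cos θ)) θ := by
  have hc : HasDerivAt (fun θ : ℝ => κ * Real.cos θ) (κ * -Real.sin θ) θ :=
    (Real.hasDerivAt_cos θ).const_mul κ
  have he : HasDerivAt (fun θ : ℝ => Real.exp (κ * Real.cos θ))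
      (Real.exp (κ * Real.cos θ) * (κ * -Real.sin θ)) θ := hc.exp
  have hu : HasDerivAt (fun θ : ℝ => (1 - Real.cos θ) ^ a)
      ((a : ℝ) * (1 - Real.cos θ) ^ (a-1) * Real.sin θ) θ := by
    have h1 : HasDerivAt (fun θ : ℝ => 1 - Real.cos θ) (Real.sin θ) θ := by
      simpa using (Real.hasDerivAt_cos θ).const_sub 1
    exact h1.fun_pow a
  have hs : HasDerivAt (fun θ : ℝ => Real.sin θ ^ (m+1))
      (((m:ℝ)+1) * Real.sin θ ^ m * Real.cos θ) θ := by
    have := (Real.hasDerivAt_sin θ).fun_pow (m+1)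
    simpa using this
  have := (he.fun_mul hu).fun_mul hs
  exact this.congr_deriv (by ring)

lemma R0 (m : ℕ) (κ : ℝ) :
    κ * (2 * J m 1 κ - J m 2 κ) = ((m:ℝ)+1) * J m 0 κ - ((m:ℝ)+1) * J m 1 κ := by
  have key : ∫ θ in (0:ℝ)..π,
      (((m:ℝ)+1) * ((1 - Real.cos θ) ^ 0 * Real.exp (κ * Real.cos θ) * Real.sin θ ^ m)
       - ((m:ℝ)+1) * ((1 - Real.cos θ) ^ 1 * Real.exp (κ * Real.cos θ) * Real.sin θ ^ m)
       - κ * (2 * ((1 - Real.cos θ) ^ 1 * Real.exp (κ * Real.cos θ) * Real.sin θ ^ m)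
              - (1 - Real.cos θ) ^ 2 * Real.exp (κ * Real.cos θ) * Real.sin θ ^ m)) = 0 := by
    have h := fun θ : ℝ => hasDeriv_aux m 0 κ θ
    have hint : IntervalIntegrable (fun θ : ℝ =>
        Real.exp (κ * Real.cos θ) * (κ * -Real.sin θ) * (1 - Real.cos θ) ^ 0 * Real.sin θ ^ (m+1)
       + Real.exp (κ * Real.cos θ) * (((0:ℕ) : ℝ) * (1 - Real.cos θ) ^ (0-1) * Real.sin θ) * Real.sin θ ^ (m+1)
       + Real.exp (κ * Real.cos θ) * (1 - Real.cos θ) ^ 0 * (((m:ℝ)+1) * Real.sin θ ^ m * Real.cos θ))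
        MeasureTheory.volume 0 π := by
      apply Continuous.intervalIntegrable; fun_prop
    have := intervalIntegral.integral_eq_sub_of_hasDerivAt (fun θ _ => h θ) hint
    rw [Real.sin_pi, Real.sin_zero] at this
    simp only [zero_pow (Nat.succ_ne_zero m), mul_zero, sub_zero] at this
    have congr_eq := intervalIntegral.integral_congr (a := (0:ℝ)) (b := π) (μ := volume)
      (f := fun θ : ℝ =>
        ((m:ℝ)+1) * ((1 - Real.cos θ) ^ 0 * Real.exp (κ * Real.cos θ) * Real.sin θ ^ m)
        - ((m:ℝ)+1) * ((1 - Real.cos θ) ^ 1 * Real.exp (κ * Real.cos θ) * Real.sin θ ^ m)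
        - κ * (2 * ((1 - Real.cos θ) ^ 1 * Real.exp (κ * Real.cos θ) * Real.sin θ ^ m)
               - (1 - Real.cos θ) ^ 2 * Real.exp (κ * Real.cos θ) * Real.sin θ ^ m))
      (g := fun θ : ℝ =>
        Real.exp (κ * Real.cos θ) * (κ * -Real.sin θ) * (1 - Real.cos θ) ^ 0 * Real.sin θ ^ (m+1)
        + Real.exp (κ * Real.cos θ) * (((0:ℕ) : ℝ) * (1 - Real.cos θ) ^ (0-1) * Real.sin θ) * Real.sin θ ^ (m+1)
        + Real.exp (κ * Real.cos θ) * (1 - Real.cos θ) ^ 0 * (((m:ℝ)+1) * Real.sin θ ^ m * Real.cos θ))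
      (by
        intro θ _
        have hsq : Real.sin θ ^ 2 = 1 - Real.cos θ ^ 2 := Real.sin_sq θ
        simp only
        linear_combination (Real.exp (κ * Real.cos θ) * Real.sin θ ^ m * κ) * hsq)
    rw [congr_eq, this]
  rw [intervalIntegral.integral_of_le pi_pos.le, integral_Ioc_eq_integral_Ioo] at key
  have e1 : ∫ θ in Set.Ioo (0:ℝ) π,
      (((m:ℝ)+1) * ((1 - Real.cos θ) ^ 0 * Real.exp (κ * Real.cos θ) * Real.sin θ ^ m)
       - ((m:ℝ)+1) * ((1 - Real.cos θ) ^ 1 * Real.exp (κ * Real.cos θ) * Real.sin θ ^ m)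
       - κ * (2 * ((1 - Real.cos θ) ^ 1 * Real.exp (κ * Real.cos θ) * Real.sin θ ^ m)
              - (1 - Real.cos θ) ^ 2 * Real.exp (κ * Real.cos θ) * Real.sin θ ^ m))
      = ((m:ℝ)+1) * J m 0 κ - ((m:ℝ)+1) * J m 1 κ - κ * (2 * J m 1 κ - J m 2 κ) := by
    rw [integral_sub, integral_sub, integral_const_mul, integral_const_mul, integral_const_mul,
        integral_sub, integral_const_mul]
    · rfl
    · exact (intJ m 1 κ).const_mul 2
    · exact intJ m 2 κ
    · exact (intJ m 0 κ).const_mul _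
    · exact (intJ m 1 κ).const_mul _
    · exact ((intJ m 0 κ).const_mul _).sub ((intJ m 1 κ).const_mul _)
    · exact (((intJ m 1 κ).const_mul 2).sub (intJ m 2 κ)).const_mul κ
  rw [e1] at key
  linarith

lemma R1 (m : ℕ) (κ : ℝ) :
    κ * (2 * J m 2 κ - J m 3 κ) = ((m:ℝ)+3) * J m 1 κ - ((m:ℝ)+2) * J m 2 κ := by
  have key : ∫ θ in (0:ℝ)..π,
      (((m:ℝ)+3) * ((1 - Real.cos θ) ^ 1 * Real.exp (κ * Real.cos θ) * Real.sin θ ^ m)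
       - ((m:ℝ)+2) * ((1 - Real.cos θ) ^ 2 * Real.exp (κ * Real.cos θ) * Real.sin θ ^ m)
       - κ * (2 * ((1 - Real.cos θ) ^ 2 * Real.exp (κ * Real.cos θ) * Real.sin θ ^ m)
              - (1 - Real.cos θ) ^ 3 * Real.exp (κ * Real.cos θ) * Real.sin θ ^ m)) = 0 := by
    have h := fun θ : ℝ => hasDeriv_aux m 1 κ θ
    have hint : IntervalIntegrable (fun θ : ℝ =>
        Real.exp (κ * Real.cos θ) * (κ * -Real.sin θ) * (1 - Real.cos θ) ^ 1 * Real.sin θ ^ (m+1)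
       + Real.exp (κ * Real.cos θ) * (((1:ℕ) : ℝ) * (1 - Real.cos θ) ^ (1-1) * Real.sin θ) * Real.sin θ ^ (m+1)
       + Real.exp (κ * Real.cos θ) * (1 - Real.cos θ) ^ 1 * (((m:ℝ)+1) * Real.sin θ ^ m * Real.cos θ))
        MeasureTheory.volume 0 π := by
      apply Continuous.intervalIntegrable; fun_prop
    have := intervalIntegral.integral_eq_sub_of_hasDerivAt (fun θ _ => h θ) hint
    rw [Real.sin_pi, Real.sin_zero] at this
    simp only [zero_pow (Nat.succ_ne_zero m), mul_zero, sub_zero] at this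
    have congr_eq := intervalIntegral.integral_congr (a := (0:ℝ)) (b := π) (μ := volume)
      (f := fun θ : ℝ =>
        ((m:ℝ)+3) * ((1 - Real.cos θ) ^ 1 * Real.exp (κ * Real.cos θ) * Real.sin θ ^ m)
        - ((m:ℝ)+2) * ((1 - Real.cos θ) ^ 2 * Real.exp (κ * Real.cos θ) * Real.sin θ ^ m)
        - κ * (2 * ((1 - Real.cos θ) ^ 2 * Real.exp (κ * Real.cos θ) * Real.sin θ ^ m)
               - (1 - Real.cos θ) ^ 3 * Real.exp (κ * Real.cos θ) * Real.sin θ ^ m))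
      (g := fun θ : ℝ =>
        Real.exp (κ * Real.cos θ) * (κ * -Real.sin θ) * (1 - Real.cos θ) ^ 1 * Real.sin θ ^ (m+1)
        + Real.exp (κ * Real.cos θ) * (((1:ℕ) : ℝ) * (1 - Real.cos θ) ^ (1-1) * Real.sin θ) * Real.sin θ ^ (m+1)
        + Real.exp (κ * Real.cos θ) * (1 - Real.cos θ) ^ 1 * (((m:ℝ)+1) * Real.sin θ ^ m * Real.cos θ))
      (by
        intro θ _
        have hsq : Real.sin θ ^ 2 = 1 - Real.cos θ ^ 2 := Real.sin_sq θ
        simp only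
        linear_combination (Real.exp (κ * Real.cos θ) * Real.sin θ ^ m
          * (κ * (1 - Real.cos θ) - 1)) * hsq)
    rw [congr_eq, this]
  rw [intervalIntegral.integral_of_le pi_pos.le, integral_Ioc_eq_integral_Ioo] at key
  have e1 : ∫ θ in Set.Ioo (0:ℝ) π,
      (((m:ℝ)+3) * ((1 - Real.cos θ) ^ 1 * Real.exp (κ * Real.cos θ) * Real.sin θ ^ m)
       - ((m:ℝ)+2) * ((1 - Real.cos θ) ^ 2 * Real.exp (κ * Real.cos θ) * Real.sin θ ^ m)
       - κ * (2 * ((1 - Real.cos θ) ^ 2 * Real.exp (κ * Real.cos θ) * Real.sin θ ^ m)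
              - (1 - Real.cos θ) ^ 3 * Real.exp (κ * Real.cos θ) * Real.sin θ ^ m))
      = ((m:ℝ)+3) * J m 1 κ - ((m:ℝ)+2) * J m 2 κ - κ * (2 * J m 2 κ - J m 3 κ) := by
    rw [integral_sub, integral_sub, integral_const_mul, integral_const_mul, integral_const_mul,
        integral_sub, integral_const_mul]
    · rfl
    · exact (intJ m 2 κ).const_mul 2
    · exact intJ m 3 κ
    · exact (intJ m 1 κ).const_mul _
    · exact (intJ m 2 κ).const_mul _
    · exact ((intJ m 1 κ).const_mul _).sub ((intJ m 2 κ).const_mul _)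
    · exact (((intJ m 2 κ).const_mul 2).sub (intJ m 3 κ)).const_mul κ
  rw [e1] at key
  linarith

lemma J0_lower (m : ℕ) {κ : ℝ} (hκ : 1 ≤ κ) :
    Real.exp (κ - 2⁻¹) * ((Real.sqrt κ)⁻¹ ^ (m+1) / ((m+1) * 2^m)) ≤ J m 0 κ := by
  have hκ0 : (0:ℝ) < κ := lt_of_lt_of_le one_pos hκ
  obtain ⟨s, hs⟩ : ∃ s, s = Real.sqrt κ := ⟨_, rfl⟩
  have hs1 : 1 ≤ s := by
    rw [hs, show (1:ℝ) = Real.sqrt 1 by simp]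
    exact Real.sqrt_le_sqrt hκ
  have hs0 : 0 < s := lt_of_lt_of_le one_pos hs1
  obtain ⟨δ, hδ⟩ : ∃ δ, δ = s⁻¹ := ⟨_, rfl⟩
  have hδ0 : 0 < δ := by rw [hδ]; positivity
  have hδ1 : δ ≤ 1 := by rw [hδ]; exact inv_le_one_of_one_le₀ hs1
  have hδπ : δ < π := lt_of_le_of_lt hδ1 (by linarith [Real.pi_gt_three])
  -- pointwise bound on Ioo 0 δ
  have hpt : ∀ θ ∈ Set.Ioo (0:ℝ) δ,
      Real.exp (κ - 2⁻¹) * (θ ^ m / 2^m)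
        ≤ (1 - Real.cos θ) ^ 0 * Real.exp (κ * Real.cos θ) * Real.sin θ ^ m := by
    intro θ hθ
    have hθ0 : 0 < θ := hθ.1
    have hθδ : θ < δ := hθ.2
    have hθ1 : θ ≤ 1 := le_trans hθδ.le hδ1
    have hexp : Real.exp (κ - 2⁻¹) ≤ Real.exp (κ * Real.cos θ) := by
      apply Real.exp_le_exp.2
      have h1 : 1 - θ^2/2 ≤ Real.cos θ := Real.one_sub_sq_div_two_le_cos
      have h2 : θ^2 ≤ δ^2 := by nlinarith
      have h3 : δ^2 = κ⁻¹ := by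
        rw [hδ, hs]
        rw [← Real.sqrt_inv]
        exact Real.sq_sqrt (by positivity)
      have h4 : κ * (1 - θ^2/2) ≤ κ * Real.cos θ := by
        apply mul_le_mul_of_nonneg_left h1 hκ0.le
      have h5 : κ - 2⁻¹ ≤ κ * (1 - θ^2/2) := by
        have : κ * θ^2 ≤ 1 := by
          calc κ * θ^2 ≤ κ * κ⁻¹ := by rw [← h3]; exact mul_le_mul_of_nonneg_left h2 hκ0.le
          _ = 1 := mul_inv_cancel₀ hκ0.ne'
        nlinarith
      linarith
    have hsin : θ / 2 ≤ Real.sin θ := by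
      have := Real.mul_le_sin (x := θ) hθ0.le (by linarith [Real.pi_gt_three])
      have hπ : θ / 2 ≤ 2 / π * θ := by
        rw [div_mul_eq_mul_div, div_le_div_iff₀ two_pos Real.pi_pos]
        nlinarith [Real.pi_lt_d2, hθ0]
      linarith
    have hsinm : (θ/2) ^ m ≤ Real.sin θ ^ m :=
      pow_le_pow_left₀ (by positivity) hsin m
    calc Real.exp (κ - 2⁻¹) * (θ ^ m / 2^m) = Real.exp (κ - 2⁻¹) * (θ/2) ^ m := by
          rw [div_pow]
    _ ≤ Real.exp (κ * Real.cos θ) * Real.sin θ ^ m := by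
          apply mul_le_mul hexp hsinm (by positivity) (by positivity)
    _ = (1 - Real.cos θ) ^ 0 * Real.exp (κ * Real.cos θ) * Real.sin θ ^ m := by
          rw [pow_zero, one_mul]
  -- compare integrals
  have step2 : ∫ θ in Set.Ioo (0:ℝ) δ, Real.exp (κ - 2⁻¹) * (θ ^ m / 2^m)
      ≤ ∫ θ in Set.Ioo (0:ℝ) δ,
        (1 - Real.cos θ) ^ 0 * Real.exp (κ * Real.cos θ) * Real.sin θ ^ m := by
    apply setIntegral_mono_on
    · exact (Continuous.integrableOn_Icc (by fun_prop)).mono_set Set.Ioo_subset_Icc_self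
    · exact (intJ m 0 κ).mono_set (Set.Ioo_subset_Ioo_right hδπ.le)
    · exact measurableSet_Ioo
    · exact hpt
  have step1 : ∫ θ in Set.Ioo (0:ℝ) δ,
        (1 - Real.cos θ) ^ 0 * Real.exp (κ * Real.cos θ) * Real.sin θ ^ m ≤ J m 0 κ := by
    apply setIntegral_mono_set (intJ m 0 κ)
    · rw [EventuallyLE, ae_restrict_iff' measurableSet_Ioo]
      apply ae_of_all
      intro x hx
      have h1 : (0:ℝ) ≤ 1 - Real.cos x := by linarith [Real.cos_le_one x]
      have hsx : 0 ≤ Real.sin x := Real.sin_nonneg_of_nonneg_of_le_pi hx.1.le hx.2.le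
      positivity
    · exact HasSubset.Subset.eventuallyLE (Set.Ioo_subset_Ioo_right hδπ.le)
  have hval : ∫ θ in Set.Ioo (0:ℝ) δ, Real.exp (κ - 2⁻¹) * (θ ^ m / 2^m)
      = Real.exp (κ - 2⁻¹) * (δ ^ (m+1) / ((m+1) * 2^m)) := by
    rw [← integral_Ioc_eq_integral_Ioo, ← intervalIntegral.integral_of_le hδ0.le]
    rw [intervalIntegral.integral_const_mul]
    have : ∫ θ in (0:ℝ)..δ, θ ^ m / 2^m = (∫ θ in (0:ℝ)..δ, θ ^ m) / 2^m := by
      rw [intervalIntegral.integral_div]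
    rw [this, integral_pow]
    simp only [zero_pow (Nat.succ_ne_zero m), sub_zero]
    field_simp
  have hfin : Real.exp (κ - 2⁻¹) * ((Real.sqrt κ)⁻¹ ^ (m+1) / ((m+1) * 2^m))
      = ∫ θ in Set.Ioo (0:ℝ) δ, Real.exp (κ - 2⁻¹) * (θ ^ m / 2^m) := by
    rw [hval, hδ, hs]
  rw [hfin]
  linarith

-- gaussian moment bound : θ^k * exp(-(b*θ^2)) ≤ √(k!) * (√b)⁻¹ ^ k
lemma moment_bound (k : ℕ) {b θ : ℝ} (hb : 0 < b) (hθ : 0 ≤ θ) :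
    θ ^ k * Real.exp (-(b * θ^2)) ≤ Real.sqrt (k.factorial) * (Real.sqrt b)⁻¹ ^ k := by
  have hx : 0 ≤ θ ^ k * Real.exp (-(b * θ^2)) := by positivity
  have hy : (0:ℝ) ≤ Real.sqrt (k.factorial) * (Real.sqrt b)⁻¹ ^ k := by positivity
  have hyk : (b * θ^2) ^ k * Real.exp (-(b * θ^2)) ≤ k.factorial := by
    have h1 : (b * θ^2) ^ k / k.factorial ≤ Real.exp (b * θ^2) :=
      Real.pow_div_factorial_le_exp _ (by positivity) k
    have h2 : (b * θ^2) ^ k ≤ k.factorial * Real.exp (b * θ^2) := by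
      rw [div_le_iff₀ (by positivity : (0:ℝ) < (k.factorial : ℝ))] at h1
      linarith
    calc (b * θ^2) ^ k * Real.exp (-(b * θ^2))
        ≤ (k.factorial * Real.exp (b * θ^2)) * Real.exp (-(b * θ^2)) := by
          apply mul_le_mul_of_nonneg_right h2 (Real.exp_nonneg _)
    _ = k.factorial := by rw [mul_assoc, ← Real.exp_add]; simp
  have hsq : (θ ^ k * Real.exp (-(b * θ^2)))^2
      ≤ (Real.sqrt (k.factorial) * (Real.sqrt b)⁻¹ ^ k)^2 := by
    have e1 : (θ ^ k * Real.exp (-(b * θ^2)))^2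
        = ((b * θ^2) ^ k * Real.exp (-(b * θ^2))) * Real.exp (-(b * θ^2)) / b ^ k := by
      field_simp
      ring
    have e2 : (Real.sqrt (k.factorial) * (Real.sqrt b)⁻¹ ^ k)^2 = k.factorial / b ^ k := by
      calc (Real.sqrt (k.factorial) * (Real.sqrt b)⁻¹ ^ k)^2
          = (Real.sqrt (k.factorial))^2 * (((Real.sqrt b)⁻¹)^2)^k := by
            rw [mul_pow, ← pow_mul, mul_comm k 2, pow_mul]
      _ = (k.factorial : ℝ) * (b⁻¹)^k := by
            rw [Real.sq_sqrt (by positivity : (0:ℝ) ≤ (k.factorial:ℝ)), inv_pow (Real.sqrt b) 2,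
              Real.sq_sqrt hb.le]
      _ = k.factorial / b ^ k := by rw [inv_pow]; ring
    rw [e1, e2]
    apply div_le_div_of_nonneg_right ?_ (by positivity)
    · calc ((b * θ^2) ^ k * Real.exp (-(b * θ^2))) * Real.exp (-(b * θ^2))
          ≤ (k.factorial : ℝ) * 1 := by
            apply mul_le_mul hyk (Real.exp_le_one_iff.mpr (neg_nonpos.mpr (by positivity)))
              (Real.exp_nonneg _) (by positivity)
      _ = k.factorial := mul_one _
  calc θ ^ k * Real.exp (-(b * θ^2)) = Real.sqrt ((θ ^ k * Real.exp (-(b * θ^2)))^2) :=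
        (Real.sqrt_sq hx).symm
  _ ≤ Real.sqrt ((Real.sqrt (k.factorial) * (Real.sqrt b)⁻¹ ^ k)^2) := Real.sqrt_le_sqrt hsq
  _ = _ := Real.sqrt_sq hy

lemma J3_upper (m : ℕ) {κ : ℝ} (hκ : 1 ≤ κ) :
    J m 3 κ ≤ Real.exp κ *
      (Real.sqrt ((m+6).factorial) * (Real.sqrt 2 * π)^(m+6) / 8 * Real.sqrt (2 * π^3))
      * ((Real.sqrt κ)⁻¹ ^ (m+7)) := by
  have hκ0 : (0:ℝ) < κ := lt_of_lt_of_le one_pos hκ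
  have hsκ : (0:ℝ) < Real.sqrt κ := Real.sqrt_pos.2 hκ0
  have hb : (0:ℝ) < κ / (2 * π^2) := by positivity
  set b : ℝ := κ / (2 * π^2) with hbdef
  have hDnn : (0:ℝ) ≤ Real.sqrt ((m+6).factorial) * (Real.sqrt 2 * π)^(m+6) / 8
      * (Real.sqrt κ)⁻¹ ^ (m+6) := by positivity
  -- pointwise bound
  have hpt : ∀ θ ∈ Set.Ioo (0:ℝ) π,
      (1 - Real.cos θ) ^ 3 * Real.exp (κ * Real.cos θ) * Real.sin θ ^ m
      ≤ Real.exp κ * (Real.sqrt ((m+6).factorial) * (Real.sqrt 2 * π)^(m+6) / 8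
          * (Real.sqrt κ)⁻¹ ^ (m+6)) * Real.exp (-(b * θ^2)) := by
    intro θ hθ
    have hθ0 : 0 < θ := hθ.1
    have hθπ : θ < π := hθ.2
    have hu0 : (0:ℝ) ≤ 1 - Real.cos θ := by linarith [Real.cos_le_one θ]
    have hsin0 : 0 ≤ Real.sin θ := Real.sin_nonneg_of_nonneg_of_le_pi hθ0.le hθπ.le
    have hsinθ : Real.sin θ ≤ θ := Real.sin_le hθ0.le
    have hu2 : 1 - Real.cos θ ≤ θ^2 / 2 := by linarith [Real.one_sub_sq_div_two_le_cos (x := θ)]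
    have hul : θ^2 / π^2 ≤ 1 - Real.cos θ := by
      have := Real.cos_le_one_sub_mul_cos_sq (x := θ) (by rw [abs_of_pos hθ0]; exact hθπ.le)
      have hπ : (0:ℝ) < π^2 := by positivity
      rw [div_le_iff₀ hπ]
      have h5 : 2 / π^2 * θ^2 * π^2 = 2 * θ^2 := by field_simp
      nlinarith [mul_le_mul_of_nonneg_right this hπ.le, sq_nonneg θ]
    have hexpdecomp : Real.exp (κ * Real.cos θ)
        = Real.exp κ * Real.exp (-(κ * (1 - Real.cos θ))) := by
      rw [← Real.exp_add]; ring_nf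
    have hexple : Real.exp (-(κ * (1 - Real.cos θ))) ≤ Real.exp (-(2 * (b * θ^2))) := by
      apply Real.exp_le_exp.2
      have : 2 * (b * θ^2) = κ * (θ^2/π^2) := by
        rw [hbdef]; field_simp
      rw [this]
      have := mul_le_mul_of_nonneg_left hul hκ0.le
      linarith
    calc (1 - Real.cos θ) ^ 3 * Real.exp (κ * Real.cos θ) * Real.sin θ ^ m
        = Real.exp κ * ((1 - Real.cos θ) ^ 3 * Real.exp (-(κ * (1 - Real.cos θ)))
            * Real.sin θ ^ m) := by rw [hexpdecomp]; ring
    _ ≤ Real.exp κ * ((θ^2/2) ^ 3 * Real.exp (-(2*(b * θ^2))) * θ ^ m) := by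
        apply mul_le_mul_of_nonneg_left ?_ (Real.exp_nonneg κ)
        apply mul_le_mul
        · apply mul_le_mul (pow_le_pow_left₀ hu0 hu2 3) hexple (Real.exp_nonneg _) (by positivity)
        · exact pow_le_pow_left₀ hsin0 hsinθ m
        · positivity
        · positivity
    _ = Real.exp κ * ((θ ^ (m+6) * Real.exp (-(b * θ^2))) * Real.exp (-(b * θ^2)) / 8) := by
        rw [show -(2*(b * θ^2)) = -(b*θ^2) + -(b*θ^2) by ring, Real.exp_add]
        ring
    _ ≤ Real.exp κ * ((Real.sqrt ((m+6).factorial) * (Real.sqrt b)⁻¹ ^ (m+6))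
          * Real.exp (-(b * θ^2)) / 8) := by
        apply mul_le_mul_of_nonneg_left ?_ (Real.exp_nonneg κ)
        apply div_le_div_of_nonneg_right ?_ (by norm_num)
        exact mul_le_mul_of_nonneg_right (moment_bound (m+6) hb hθ0.le) (Real.exp_nonneg _)
    _ = Real.exp κ * (Real.sqrt ((m+6).factorial) * (Real.sqrt 2 * π)^(m+6) / 8
          * (Real.sqrt κ)⁻¹ ^ (m+6)) * Real.exp (-(b * θ^2)) := by
        have hsb : (Real.sqrt b)⁻¹ = Real.sqrt 2 * π * (Real.sqrt κ)⁻¹ := by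
          rw [hbdef, Real.sqrt_div hκ0.le, show Real.sqrt (2*π^2) = Real.sqrt 2 * π by
            rw [Real.sqrt_mul (by norm_num), Real.sqrt_sq Real.pi_pos.le]]
          rw [inv_div, div_eq_mul_inv]
        rw [hsb, mul_pow]
        ring
  have step1 : J m 3 κ ≤ ∫ θ in Set.Ioo (0:ℝ) π,
      Real.exp κ * (Real.sqrt ((m+6).factorial) * (Real.sqrt 2 * π)^(m+6) / 8
        * (Real.sqrt κ)⁻¹ ^ (m+6)) * Real.exp (-(b * θ^2)) := by
    apply setIntegral_mono_on (intJ m 3 κ)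
    · exact (Continuous.integrableOn_Icc (by fun_prop)).mono_set Set.Ioo_subset_Icc_self
    · exact measurableSet_Ioo
    · exact hpt
  have step2 : ∫ θ in Set.Ioo (0:ℝ) π,
      Real.exp κ * (Real.sqrt ((m+6).factorial) * (Real.sqrt 2 * π)^(m+6) / 8
        * (Real.sqrt κ)⁻¹ ^ (m+6)) * Real.exp (-(b * θ^2))
      = Real.exp κ * (Real.sqrt ((m+6).factorial) * (Real.sqrt 2 * π)^(m+6) / 8
        * (Real.sqrt κ)⁻¹ ^ (m+6)) * ∫ θ in Set.Ioo (0:ℝ) π, Real.exp (-(b * θ^2)) := by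
    rw [integral_const_mul]
  have step3 : ∫ θ in Set.Ioo (0:ℝ) π, Real.exp (-(b * θ^2)) ≤ Real.sqrt (2*π^3) * (Real.sqrt κ)⁻¹ := by
    have hint : Integrable (fun θ : ℝ => Real.exp (-(b * θ^2))) := by
      have := integrable_exp_neg_mul_sq hb
      simpa [neg_mul] using this
    have h1 : ∫ θ in Set.Ioo (0:ℝ) π, Real.exp (-(b * θ^2)) ≤ ∫ θ : ℝ, Real.exp (-(b * θ^2)) :=
      setIntegral_le_integral hint (ae_of_all _ fun x => Real.exp_nonneg _)
    have h2 : ∫ θ : ℝ, Real.exp (-(b * θ^2)) = Real.sqrt (π / b) := by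
      rw [← integral_gaussian b]
      congr 1; ext x; rw [neg_mul]
    have h3 : Real.sqrt (π / b) = Real.sqrt (2*π^3) * (Real.sqrt κ)⁻¹ := by
      have : π / b = (2*π^3) / κ := by rw [hbdef]; field_simp
      rw [this, Real.sqrt_div (by positivity), div_eq_mul_inv]
    linarith [h1, h2 ▸ h1, h3 ▸ (h2 ▸ h1)]
  calc J m 3 κ ≤ _ := step1
  _ = _ := step2
  _ ≤ Real.exp κ * (Real.sqrt ((m+6).factorial) * (Real.sqrt 2 * π)^(m+6) / 8
        * (Real.sqrt κ)⁻¹ ^ (m+6)) * (Real.sqrt (2*π^3) * (Real.sqrt κ)⁻¹) := by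
    apply mul_le_mul_of_nonneg_left step3 (by positivity)
  _ = Real.exp κ *
      (Real.sqrt ((m+6).factorial) * (Real.sqrt 2 * π)^(m+6) / 8 * Real.sqrt (2 * π^3))
      * ((Real.sqrt κ)⁻¹ ^ (m+7)) := by
    rw [show m+7 = (m+6)+1 from rfl, pow_succ]
    ring

lemma J3_ratio (m : ℕ) : ∃ C : ℝ, 0 ≤ C ∧ ∀ κ : ℝ, 1 ≤ κ →
    J m 3 κ ≤ C * (κ^3)⁻¹ * J m 0 κ := by
  refine ⟨(Real.sqrt ((m+6).factorial) * (Real.sqrt 2 * π)^(m+6) / 8 * Real.sqrt (2 * π^3))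
      * Real.exp 2⁻¹ * ((m+1) * 2^m), by positivity, ?_⟩
  intro κ hκ
  have hκ0 : (0:ℝ) < κ := lt_of_lt_of_le one_pos hκ
  have hsκ : (0:ℝ) < Real.sqrt κ := Real.sqrt_pos.2 hκ0
  have hk6 : ((κ:ℝ)^3)⁻¹ = (Real.sqrt κ)⁻¹ ^ 6 := by
    rw [inv_pow, show (6:ℕ) = 2*3 from rfl, pow_mul, Real.sq_sqrt hκ0.le]
  have key : Real.exp κ *
      (Real.sqrt ((m+6).factorial) * (Real.sqrt 2 * π)^(m+6) / 8 * Real.sqrt (2 * π^3))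
      * ((Real.sqrt κ)⁻¹ ^ (m+7))
      = ((Real.sqrt ((m+6).factorial) * (Real.sqrt 2 * π)^(m+6) / 8 * Real.sqrt (2 * π^3))
          * Real.exp 2⁻¹ * ((m+1) * 2^m)) * (κ^3)⁻¹
        * (Real.exp (κ - 2⁻¹) * ((Real.sqrt κ)⁻¹ ^ (m+1) / ((m+1) * 2^m))) := by
    rw [hk6, Real.exp_sub, show m+7 = 6+(m+1) by omega, pow_add]
    have hm1 : ((m:ℝ)+1) * 2^m ≠ 0 := by positivity
    have he : Real.exp 2⁻¹ ≠ 0 := Real.exp_ne_zero _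
    field_simp
    ring
    rw [show (7:ℕ) = 6 + 1 from rfl, pow_succ (Real.sqrt κ)⁻¹ 6, inv_pow (Real.sqrt κ) 6, ← mul_assoc,
      mul_inv_cancel₀ (pow_ne_zero _ hsκ.ne'), one_mul]
  calc J m 3 κ ≤ _ := J3_upper m hκ
  _ = _ := key
  _ ≤ _ := by
    apply mul_le_mul_of_nonneg_left (J0_lower m hκ)
    positivity

set_option maxHeartbeats 1000000 in
theorem orderParam_expansion_infty (n : ℕ) (hn : 2 ≤ n) :
    (fun κ : ℝ => orderParam n κ - 1 + ((n : ℝ) - 1) / (2 * κ)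
        - ((n : ℝ) - 1) * ((n : ℝ) - 3) / (8 * κ ^ 2))
      =O[atTop] fun κ : ℝ => (κ ^ 3)⁻¹ := by
  set m : ℕ := n - 2 with hm
  set M : ℝ := (m : ℝ) with hM
  have hcast : (n:ℝ) = M + 2 := by
    rw [hM, hm]
    have : ((n-2:ℕ):ℝ) = (n:ℝ) - 2 := by
      push_cast [Nat.cast_sub hn]; ring
    rw [this]; ring
  have hM0 : 0 ≤ M := by rw [hM]; positivity
  obtain ⟨C₃, hC₃0, hC₃⟩ := J3_ratio m
  rw [isBigO_iff]
  refine ⟨(8*C₃ + (M+1)^2*(M+11) + (M+1)^3*(M+2))/32, ?_⟩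
  filter_upwards [eventually_ge_atTop (1:ℝ)] with κ hκ
  have hκ0 : (0:ℝ) < κ := lt_of_lt_of_le one_pos hκ
  have h0 : 0 < J m 0 κ := J0_pos m κ
  -- identify orderParam with 1 - J1/J0
  have hB : (∫ θ in Set.Ioo (0:ℝ) π, Real.exp (κ * Real.cos θ) * Real.sin θ ^ m) = J m 0 κ := by
    rw [J]
    apply setIntegral_congr_fun measurableSet_Ioo
    intro θ _; simp
  have hA : (∫ θ in Set.Ioo (0:ℝ) π, Real.cos θ * Real.exp (κ * Real.cos θ) * Real.sin θ ^ m)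
      = J m 0 κ - J m 1 κ := by
    rw [J, J, ← integral_sub (intJ m 0 κ) (intJ m 1 κ)]
    apply setIntegral_congr_fun measurableSet_Ioo
    intro θ _; simp only; ring
  have horder : orderParam n κ = 1 - J m 1 κ / J m 0 κ := by
    rw [orderParam, ← hm, hA, hB]
    field_simp
  -- normalized quantities
  set x : ℝ := J m 1 κ / J m 0 κ with hxd
  set y : ℝ := J m 2 κ / J m 0 κ with hyd
  set z : ℝ := J m 3 κ / J m 0 κ with hzd
  have eq1 : κ * (2*x - y) = (M+1) - (M+1)*x := by
    rw [hxd, hyd]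
    field_simp
    linear_combination R0 m κ
  have eq2 : κ * (2*y - z) = (M+3)*x - (M+2)*y := by
    rw [hxd, hyd, hzd]
    field_simp
    linear_combination R1 m κ
  have hz0 : 0 ≤ z := by rw [hzd]; exact div_nonneg (J_nonneg m 3 κ) h0.le
  have hz : z ≤ C₃ * (κ^3)⁻¹ := by
    rw [hzd, div_le_iff₀ h0]
    exact hC₃ κ hκ
  have hx : x * (4*κ^2 + 3*(M+1)*κ + (M+1)*(M+2)) = κ^2*z + (M+1)*(2*κ+M+2) := by
    linear_combination (2*κ+M+2)*eq1 + κ*eq2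
  -- the target quantity
  have hT : orderParam n κ - 1 + ((n:ℝ)-1)/(2*κ) - ((n:ℝ)-1)*((n:ℝ)-3)/(8*κ^2)
      = -x + (M+1)/(2*κ) - (M+1)*(M-1)/(8*κ^2) := by
    rw [horder, hcast]; ring
  have hTN : (-x + (M+1)/(2*κ) - (M+1)*(M-1)/(8*κ^2)) * (8*κ^2*(4*κ^2 + 3*(M+1)*κ + (M+1)*(M+2)))
      = -8*κ^4*z + (M+1)^2*(M+11)*κ - (M-1)*(M+1)^2*(M+2) := by
    have hκne : κ ≠ 0 := hκ0.ne'
    have e : (-x + (M+1)/(2*κ) - (M+1)*(M-1)/(8*κ^2)) * (8*κ^2*(4*κ^2 + 3*(M+1)*κ + (M+1)*(M+2)))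
        = -(x*(8*κ^2*(4*κ^2 + 3*(M+1)*κ + (M+1)*(M+2))))
          + (M+1)*4*κ*(4*κ^2 + 3*(M+1)*κ + (M+1)*(M+2))
          - (M+1)*(M-1)*(4*κ^2 + 3*(M+1)*κ + (M+1)*(M+2)) := by
      field_simp
      ring
    rw [e]
    linear_combination (-8*κ^2) * hx
  rw [hT, Real.norm_eq_abs, Real.norm_eq_abs]
  have hQpos : (0:ℝ) < 4*κ^2 + 3*(M+1)*κ + (M+1)*(M+2) := by
    have h1 : (0:ℝ) < κ^2 := by positivity
    nlinarith [mul_pos (show (0:ℝ) < M+1 by linarith) hκ0,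
      mul_pos (show (0:ℝ) < M+1 by linarith) (show (0:ℝ) < M+2 by linarith)]
  have hQ32 : 32*κ^4 ≤ 8*κ^2*(4*κ^2 + 3*(M+1)*κ + (M+1)*(M+2)) := by
    have h30 : (0:ℝ) ≤ 24*(M+1)*κ^3 + 8*(M+1)*(M+2)*κ^2 := by positivity
    nlinarith
  have hNbound : |(-8*κ^4*z + (M+1)^2*(M+11)*κ - (M-1)*(M+1)^2*(M+2))|
      ≤ (8*C₃ + (M+1)^2*(M+11) + (M+1)^3*(M+2)) * κ := by
    have hP : (0:ℝ) ≤ (M+1)^2*(M+2) := by positivity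
    have h1 : 0 ≤ 8*κ^4*z := by positivity
    have h2 : 8*κ^4*z ≤ 8*C₃*κ := by
      have h21 := mul_le_mul_of_nonneg_left hz (by positivity : (0:ℝ) ≤ 8*κ^4)
      have h22 : 8*κ^4*(C₃ * (κ^3)⁻¹) = 8*C₃*κ := by field_simp
      linarith
    have h3a : (M-1)*((M+1)^2*(M+2)) ≤ (M+1)*((M+1)^2*(M+2)) :=
      mul_le_mul_of_nonneg_right (by linarith) hP
    have h3b : (M+1)*((M+1)^2*(M+2)) ≤ (M+1)*((M+1)^2*(M+2))*κ :=
      le_mul_of_one_le_right (by positivity) hκ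
    have h3 : (M-1)*((M+1)^2*(M+2)) ≤ (M+1)^3*(M+2)*κ := by linarith [h3a, h3b]
    have h4a : -((M+1)*((M+1)^2*(M+2))) ≤ (M-1)*((M+1)^2*(M+2)) :=  by
      have := mul_le_mul_of_nonneg_right (show -(M+1) ≤ M-1 by linarith) hP
      linarith
    have h4 : -((M+1)^3*(M+2)*κ) ≤ (M-1)*((M+1)^2*(M+2)) := by linarith [h4a, h3b]
    have h5 : (0:ℝ) ≤ (M+1)^2*(M+11)*κ := by positivity
    have h6 : (0:ℝ) ≤ 8*C₃*κ := by positivity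
    rw [abs_le]
    constructor
    · linarith
    · linarith
  have habs : |(-x + (M+1)/(2*κ) - (M+1)*(M-1)/(8*κ^2))| * (8*κ^2*(4*κ^2 + 3*(M+1)*κ + (M+1)*(M+2)))
      = |(-8*κ^4*z + (M+1)^2*(M+11)*κ - (M-1)*(M+1)^2*(M+2))| := by
    rw [← hTN, abs_mul, abs_of_pos (mul_pos (by positivity : (0:ℝ) < 8*κ^2) hQpos)]
  have habs3 : |((κ:ℝ)^3)⁻¹| = (κ^3)⁻¹ := abs_of_pos (by positivity)
  rw [habs3]
  set T := |(-x + (M+1)/(2*κ) - (M+1)*(M-1)/(8*κ^2))| with hTd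
  have hT0 : 0 ≤ T := abs_nonneg _
  have step : T * (32*κ^4) ≤ (8*C₃ + (M+1)^2*(M+11) + (M+1)^3*(M+2)) * κ := by
    calc T * (32*κ^4) ≤ T * (8*κ^2*(4*κ^2 + 3*(M+1)*κ + (M+1)*(M+2))) := by
          apply mul_le_mul_of_nonneg_left hQ32 hT0
    _ = _ := habs
    _ ≤ _ := hNbound
  rw [div_mul_eq_mul_div, le_div_iff₀ (by norm_num : (0:ℝ) < 32)]
  have hκ3 : (0:ℝ) < κ^3 := by positivity
  rw [← mul_le_mul_iff_of_pos_right hκ3]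
  have e : (8*C₃ + (M+1)^2*(M+11) + (M+1)^3*(M+2)) * (κ^3)⁻¹ * κ^3
      = (8*C₃ + (M+1)^2*(M+11) + (M+1)^3*(M+2)) := by field_simp
  rw [e]
  nlinarith [step, hκ0, hT0]
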